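/- Let f, g, c_p > 0 and Π₀ ∈ ℝ, and let c(x, y) = (f²/(2y₂))(x₁ − y₁)² + g x₂/y₂ − c_p Π₀ for x ∈ ℝ² and y ∈ ℝ² with y₂ > 0, and let Φ(x; y) = ((y₂/f²) x₁ + y₁, (y₂²/g)(x₂ − x₁²/(2f²))). Let N ≥ 1, let z¹, …, z^N ∈ ℝ² with z₂^i > 0 for all i, let w ∈ ℝ^N, let X ⊆ ℝ² be any set, and define the c-Laguerre cells L^i = { x ∈ X : c(x, z^i) − w^i ≤ c(x, z^j) − w^j for all j ∈ {1, …, N} }. Fix y ∈ ℝ² with y₂ > 0 and suppose the chart preimage Φ(·;y)⁻¹(X) of the domain is convex. Then for each i, the chart preimage Φ(·; y)⁻¹(L^i) = { p ∈ ℝ² : Φ(p; y) ∈ L^i } is a convex subset of ℝ², being an intersection of Φ(·;y)⁻¹(X) with finitely many half-planes. -/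
import Mathlib


/-- In the `c`-exponential chart at `y`, each `c`-Laguerre cell has convex
preimage: if the chart preimage of the domain `X` is convex, then for each `i` the
chart preimage of the cell `L^i` is a convex subset of `ℝ²`. -/
theorem stmt_9
    (f g c_p Pr₀ : ℝ) (hf : 0 < f) (hg : 0 < g) (hcp : 0 < c_p)
    (c : (ℝ × ℝ) → (ℝ × ℝ) → ℝ)
    (hc : ∀ x y : ℝ × ℝ,
      c x y = f ^ 2 / (2 * y.2) * (x.1 - y.1) ^ 2 + g * x.2 / y.2 - c_p * Pr₀)
    (Φ : (ℝ × ℝ) → (ℝ × ℝ) → ℝ × ℝ)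
    (hΦ : ∀ x y : ℝ × ℝ,
      Φ x y = (y.2 / f ^ 2 * x.1 + y.1, y.2 ^ 2 / g * (x.2 - x.1 ^ 2 / (2 * f ^ 2))))
    (N : ℕ) (hN : 1 ≤ N)
    (z : Fin N → ℝ × ℝ) (hz : ∀ i, 0 < (z i).2)
    (w : Fin N → ℝ)
    (X : Set (ℝ × ℝ))
    (L : Fin N → Set (ℝ × ℝ))
    (hL : ∀ i, L i = {x ∈ X | ∀ j, c x (z i) - w i ≤ c x (z j) - w j})
    (y : ℝ × ℝ) (hy : 0 < y.2)
    (hXconv : Convex ℝ ((fun p => Φ p y) ⁻¹' X)) :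
    ∀ i, Convex ℝ ((fun p => Φ p y) ⁻¹' L i) := by
  intro i
  -- key affinity fact: p ↦ c (Φ p y) ζ is affine for ζ with ζ.2 ≠ 0
  have key : ∀ (ζ : ℝ × ℝ), ζ.2 ≠ 0 → ∀ (p q : ℝ × ℝ) (a b : ℝ), a + b = 1 →
      c (Φ (a • p + b • q) y) ζ = a * c (Φ p y) ζ + b * c (Φ q y) ζ := by
    intro ζ hζ p q a b hab
    have hb : b = 1 - a := by linarith
    subst hb
    simp only [hΦ, hc, Prod.smul_fst, Prod.smul_snd, Prod.fst_add, Prod.snd_add,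
      smul_eq_mul]
    have hf2 : f ^ 2 ≠ 0 := by positivity
    have hy2 : y.2 ≠ 0 := ne_of_gt hy
    have hg' : g ≠ 0 := ne_of_gt hg
    field_simp
    ring
  intro x hx x' hx' a b ha hb hab
  simp only [Set.mem_preimage, hL, Set.mem_setOf_eq] at hx hx' ⊢
  constructor
  · exact hXconv hx.1 hx'.1 ha hb hab
  · intro j
    have h1 := hx.2 j
    have h2 := hx'.2 j
    have ki := key (z i) (ne_of_gt (hz i)) x x' a b hab
    have kj := key (z j) (ne_of_gt (hz j)) x x' a b hab
    rw [ki, kj]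
    have h1' := mul_le_mul_of_nonneg_left h1 ha
    have h2' := mul_le_mul_of_nonneg_left h2 hb
    rw [mul_sub, mul_sub] at h1' h2'
    have hwi : w i = a * w i + b * w i := by rw [← add_mul, hab, one_mul]
    have hwj : w j = a * w j + b * w j := by rw [← add_mul, hab, one_mul]
    linarith
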